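/- arXiv:1804.05431 — 6 statements merged into one kernel-verified Lean document; each statement's English description precedes it below -/
import Mathlib

section
/- Let k ≥ 1 be an integer, let C₁, C₂, …, C_k be nonnegative integers with C₁ = max_{1 ≤ i ≤ k} C_i, let N be a nonnegative integer, and let A₁, A₂, …, A_k be nonnegative integers with A₁ + A₂ + … + A_k = N. Then ∏_{i=1}^k (A_i + C_i)! ≤ (N + C₁)! · ∏_{i=2}^k C_i!. -/
open Nat Finset

lemma two_term (a c d : ℕ) (h : c ≤ d) : (a + c)! * d ! ≤ (a + d)! * c ! := by
  induction a with
  | zero => simp [Nat.mul_comm]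
  | succ n ih =>
      have h1 : n + 1 + c = (n + c) + 1 := by ring
      have h2 : n + 1 + d = (n + d) + 1 := by ring
      rw [h1, h2, Nat.factorial_succ, Nat.factorial_succ, Nat.mul_assoc, Nat.mul_assoc]
      exact Nat.mul_le_mul (by omega) ih

lemma aux (k : ℕ) (C A : Fin k → ℕ) (j : Fin k) :
    ∀ s : Finset (Fin k), j ∉ s → (∀ i ∈ s, C i ≤ C j) →
    (A j + C j)! * ∏ i ∈ s, (A i + C i)! ≤
      ((A j + ∑ i ∈ s, A i) + C j)! * ∏ i ∈ s, (C i)! := by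
  intro s
  induction s using Finset.induction with
  | empty => simp
  | @insert x t hx ih =>
      intro hj hCs
      rw [Finset.prod_insert hx, Finset.prod_insert hx, Finset.sum_insert hx]
      have hjt : j ∉ t := fun h => hj (Finset.mem_insert_of_mem h)
      have hCt : ∀ i ∈ t, C i ≤ C j := fun i hi => hCs i (Finset.mem_insert_of_mem hi)
      have h1 := ih hjt hCt
      calc (A j + C j)! * ((A x + C x)! * ∏ i ∈ t, (A i + C i)!)
          = (A x + C x)! * ((A j + C j)! * ∏ i ∈ t, (A i + C i)!) := by ring
        _ ≤ (A x + C x)! * (((A j + ∑ i ∈ t, A i) + C j)! * ∏ i ∈ t, (C i)!) :=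
            Nat.mul_le_mul_left _ h1
        _ = (A x + C x)! * ((A j + ∑ i ∈ t, A i) + C j)! * ∏ i ∈ t, (C i)! := by ring
        _ ≤ (A x + ((A j + ∑ i ∈ t, A i) + C j))! * (C x)! * ∏ i ∈ t, (C i)! := by
            apply Nat.mul_le_mul_right
            exact two_term _ _ _ (le_trans (hCs x (Finset.mem_insert_self x t)) (by omega))
        _ = ((A j + (A x + ∑ i ∈ t, A i)) + C j)! * ((C x)! * ∏ i ∈ t, (C i)!) := by
            rw [show A x + ((A j + ∑ i ∈ t, A i) + C j) = (A j + (A x + ∑ i ∈ t, A i)) + C j by ring]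
            ring

/-- Let `k ≥ 1`, let `C₁, …, C_k` be nonnegative integers with
`C₁ = max_i C_i`, and let `A₁, …, A_k` be nonnegative integers with `Σ A_i = N`.
Then `∏_{i=1}^k (A_i + C_i)! ≤ (N + C₁)! · ∏_{i=2}^k C_i!`. -/
theorem prod_add_factorial_le (k : ℕ) (hk : 1 ≤ k) (C A : Fin k → ℕ) (N : ℕ)
    (hC : ∀ i, C i ≤ C ⟨0, hk⟩) (hA : ∑ i, A i = N) :
    ∏ i, (A i + C i)! ≤ (N + C ⟨0, hk⟩)! * ∏ i ∈ Finset.univ.erase ⟨0, hk⟩, (C i)! := by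
  set j : Fin k := ⟨0, hk⟩
  have hmem : j ∈ (univ : Finset (Fin k)) := Finset.mem_univ j
  have hprod : ∏ i, (A i + C i)! =
      (A j + C j)! * ∏ i ∈ univ.erase j, (A i + C i)! :=
    (Finset.mul_prod_erase univ _ hmem).symm
  have hsum : A j + ∑ i ∈ univ.erase j, A i = N := by
    rw [← hA]; exact Finset.add_sum_erase univ A hmem
  rw [hprod, ← hsum]
  exact aux k C A j (univ.erase j) (Finset.notMem_erase j univ)
    (fun i _ => hC i)
end

section
/- Let k ≥ 2 be an integer, let C₁, C₂, …, C_k be nonnegative integers with C₁ = max_{1 ≤ i ≤ k} C_i and C₂ = max_{2 ≤ i ≤ k} C_i, let N be a nonnegative integer, and let A₁, A₂, …, A_k be nonnegative integers with A₁ + A₂ + … + A_k = N such that at least two of the A_i are positive. Then ∏_{i=1}^k (A_i + C_i)! ≤ (N + C₁ − 1)! · (C₂ + 1)! · ∏_{i=3}^k C_i!. -/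
open Nat Finset

lemma fac_step (u w d : ℕ) (h : w ≤ u) : u ! * (w + d)! ≤ (u + d)! * w ! := by
  induction d with
  | zero => simp [Nat.mul_comm]
  | succ d ih =>
    have h1 : w + (d + 1) = (w + d) + 1 := by ring
    have h2 : u + (d + 1) = (u + d) + 1 := by ring
    rw [h1, h2, Nat.factorial_succ, Nat.factorial_succ]
    calc u ! * ((w + d + 1) * (w + d)!) = (w + d + 1) * (u ! * (w + d)!) := by ring
      _ ≤ (u + d + 1) * ((u + d)! * w !) := Nat.mul_le_mul (by omega) ih
      _ = (u + d + 1) * (u + d)! * w ! := by ring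

lemma fac_merge (u v w : ℕ) (h1 : w ≤ u) (h2 : w ≤ v) :
    u ! * v ! ≤ (u + v - w)! * w ! := by
  have := fac_step u w (v - w) h1
  rw [Nat.add_sub_cancel' h2] at this
  have he : u + (v - w) = u + v - w := by omega
  rwa [he] at this

lemma merge_set {k : ℕ} (C A : Fin k → ℕ) (a0 c0 : ℕ) (t : Finset (Fin k))
    (h : ∀ i ∈ t, C i ≤ c0) :
    (a0 + c0)! * ∏ i ∈ t, (A i + C i)! ≤
      (a0 + ∑ i ∈ t, A i + c0)! * ∏ i ∈ t, (C i)! := by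
  induction t using Finset.cons_induction with
  | empty => simp
  | cons j t hj ih =>
    rw [Finset.prod_cons, Finset.prod_cons, Finset.sum_cons]
    have hC : ∀ i ∈ t, C i ≤ c0 := fun i hi => h i (Finset.mem_cons_of_mem hi)
    have hj' : C j ≤ c0 := h j (Finset.mem_cons_self j t)
    calc (a0 + c0)! * ((A j + C j)! * ∏ i ∈ t, (A i + C i)!)
        = (A j + C j)! * ((a0 + c0)! * ∏ i ∈ t, (A i + C i)!) := by ring
      _ ≤ (A j + C j)! * ((a0 + ∑ i ∈ t, A i + c0)! * ∏ i ∈ t, (C i)!) :=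
          Nat.mul_le_mul_left _ (ih hC)
      _ = ((a0 + ∑ i ∈ t, A i + c0)! * (A j + C j)!) * ∏ i ∈ t, (C i)! := by ring
      _ ≤ ((a0 + (A j + ∑ i ∈ t, A i) + c0)! * (C j)!) * ∏ i ∈ t, (C i)! := by
          apply Nat.mul_le_mul_right
          have := fac_merge (a0 + ∑ i ∈ t, A i + c0) (A j + C j) (C j) (by omega) (by omega)
          have he : a0 + ∑ i ∈ t, A i + c0 + (A j + C j) - C j
              = a0 + (A j + ∑ i ∈ t, A i) + c0 := by omega
          rwa [he] at this
      _ = (a0 + (A j + ∑ i ∈ t, A i) + c0)! * ((C j)! * ∏ i ∈ t, (C i)!) := by ring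

/-- Let `k ≥ 2`, let `C₁, …, C_k` be nonnegative integers with
`C₁ = max_{1 ≤ i ≤ k} C_i` and `C₂ = max_{2 ≤ i ≤ k} C_i`, and let `A₁, …, A_k` be
nonnegative integers with `Σ A_i = N`, at least two of which are positive.
Then `∏_{i=1}^k (A_i + C_i)! ≤ (N + C₁ − 1)! · (C₂ + 1)! · ∏_{i=3}^k C_i!`. -/
theorem prod_add_factorial_le_of_two_pos (k : ℕ) (hk : 2 ≤ k) (C A : Fin k → ℕ) (N : ℕ)
    (hC1 : ∀ i, C i ≤ C ⟨0, by omega⟩)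
    (hC2 : ∀ i : Fin k, i ≠ ⟨0, by omega⟩ → C i ≤ C ⟨1, by omega⟩)
    (hA : ∑ i, A i = N)
    (htwo : ∃ i j : Fin k, i ≠ j ∧ 0 < A i ∧ 0 < A j) :
    ∏ i, (A i + C i)! ≤
      (N + C ⟨0, by omega⟩ - 1)! * (C ⟨1, by omega⟩ + 1)! *
        ∏ i ∈ (Finset.univ.erase ⟨0, by omega⟩).erase ⟨1, by omega⟩, (C i)! := by
  set i0 : Fin k := ⟨0, by omega⟩ with hi0
  set i1 : Fin k := ⟨1, by omega⟩ with hi1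
  -- choose p ≠ i0 with A p > 0 and another positive index q ≠ p
  obtain ⟨i, j, hij, hi, hj⟩ := htwo
  obtain ⟨p, q, hpq, hp0, hp, hq⟩ :
      ∃ p q : Fin k, p ≠ q ∧ p ≠ i0 ∧ 0 < A p ∧ 0 < A q := by
    by_cases h : i = i0
    · exact ⟨j, i, hij.symm, fun hji => hij (h ▸ hji.symm ▸ rfl), hj, hi⟩
    · exact ⟨i, j, hij, h, hi, hj⟩
  -- N - A p ≥ 1
  have hAq : A q + A p ≤ N := by
    rw [← hA]
    have : A q + A p = ∑ x ∈ {q, p}, A x := by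
      rw [Finset.sum_pair (fun h => hpq h.symm)]
    rw [this]
    exact Finset.sum_le_sum_of_subset (Finset.subset_univ _)
  have hpN : A p + 1 ≤ N := by omega
  set t : Finset (Fin k) := (Finset.univ.erase i0).erase p with ht
  have hpmem : p ∈ Finset.univ.erase i0 := Finset.mem_erase.2 ⟨hp0, Finset.mem_univ _⟩
  have h0mem : i0 ∈ (Finset.univ : Finset (Fin k)) := Finset.mem_univ _
  -- decompose total product
  have hprod : ∏ i, (A i + C i)! =
      (A i0 + C i0)! * ((A p + C p)! * ∏ i ∈ t, (A i + C i)!) := by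
    rw [ht, Finset.mul_prod_erase _ (fun i => (A i + C i)!) hpmem,
      Finset.mul_prod_erase _ (fun i => (A i + C i)!) h0mem]
  -- decompose total sum
  have hsum : A i0 + (A p + ∑ i ∈ t, A i) = N := by
    rw [← hA, ht, Finset.add_sum_erase _ A hpmem, Finset.add_sum_erase _ A h0mem]
  set S := ∑ i ∈ t, A i with hS
  have hi01 : i1 ≠ i0 := by
    simp only [hi0, hi1, ne_eq, Fin.mk.injEq]
    omega
  -- step 1: merge everything in t into slot i0
  have step1 : (A i0 + C i0)! * ∏ i ∈ t, (A i + C i)! ≤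
      (A i0 + S + C i0)! * ∏ i ∈ t, (C i)! :=
    merge_set C A (A i0) (C i0) t (fun i _ => hC1 i)
  -- step 2: final merge with slot p
  have hCp1 : C p ≤ C i1 := hC2 p hp0
  have hCp0 : C p ≤ C i0 := hC1 p
  have hNS : A i0 + S = N - A p := by omega
  have step2 : (A i0 + S + C i0)! * (A p + C p)! ≤
      (N + C i0 - 1)! * (C p + 1)! := by
    have := fac_merge (A i0 + S + C i0) (A p + C p) (C p + 1) (by omega) (by omega)
    have he : A i0 + S + C i0 + (A p + C p) - (C p + 1) = N + C i0 - 1 := by omega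
    rwa [he] at this
  -- step 3: swap C p with C i1 if needed
  have step3 : (C p + 1)! * ∏ i ∈ t, (C i)! ≤
      (C i1 + 1)! * ∏ i ∈ (Finset.univ.erase i0).erase i1, (C i)! := by
    by_cases hp1 : p = i1
    · have hteq : t = (Finset.univ.erase i0).erase i1 := by rw [ht, hp1]
      rw [hteq, hp1]
    · have h1t : i1 ∈ t := by
        rw [ht]
        exact Finset.mem_erase.2 ⟨fun h => hp1 h.symm,
          Finset.mem_erase.2 ⟨hi01, Finset.mem_univ _⟩⟩
      have hpt' : p ∈ (Finset.univ.erase i0).erase i1 := by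
        exact Finset.mem_erase.2 ⟨hp1, hpmem⟩
      have hcomm : t.erase i1 = ((Finset.univ.erase i0).erase i1).erase p := by
        ext x
        simp only [ht, Finset.mem_erase, Finset.mem_univ, and_true]
        tauto
      rw [← Finset.mul_prod_erase _ _ h1t, ← Finset.mul_prod_erase _ _ hpt', hcomm]
      rw [Nat.factorial_succ, Nat.factorial_succ]
      calc (C p + 1) * (C p)! * ((C i1)! * ∏ i ∈ ((Finset.univ.erase i0).erase i1).erase p, (C i)!)
          = ((C p + 1) * ((C p)! * (C i1)!)) * ∏ i ∈ ((Finset.univ.erase i0).erase i1).erase p, (C i)! := by ring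
        _ ≤ ((C i1 + 1) * ((C i1)! * (C p)!)) * ∏ i ∈ ((Finset.univ.erase i0).erase i1).erase p, (C i)! := by
            apply Nat.mul_le_mul_right
            exact Nat.mul_le_mul (by omega) (by rw [Nat.mul_comm])
        _ = (C i1 + 1) * (C i1)! * ((C p)! * ∏ i ∈ ((Finset.univ.erase i0).erase i1).erase p, (C i)!) := by ring
  -- combine
  calc ∏ i, (A i + C i)!
      = (A p + C p)! * ((A i0 + C i0)! * ∏ i ∈ t, (A i + C i)!) := by rw [hprod]; ring
    _ ≤ (A p + C p)! * ((A i0 + S + C i0)! * ∏ i ∈ t, (C i)!) :=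
        Nat.mul_le_mul_left _ step1
    _ = ((A i0 + S + C i0)! * (A p + C p)!) * ∏ i ∈ t, (C i)! := by ring
    _ ≤ ((N + C i0 - 1)! * (C p + 1)!) * ∏ i ∈ t, (C i)! :=
        Nat.mul_le_mul_right _ step2
    _ = (N + C i0 - 1)! * ((C p + 1)! * ∏ i ∈ t, (C i)!) := by ring
    _ ≤ (N + C i0 - 1)! * ((C i1 + 1)! * ∏ i ∈ (Finset.univ.erase i0).erase i1, (C i)!) :=
        Nat.mul_le_mul_left _ step3
    _ = (N + C i0 - 1)! * (C i1 + 1)! * ∏ i ∈ (Finset.univ.erase i0).erase i1, (C i)! := by ring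
end

section
/- Let k ≥ 2 be an integer and let A₁, A₂, …, A_k be positive even integers with A₁ + A₂ + … + A_k = N (so N is even), such that at least two of the A_i are greater than or equal to 4. Then ∏_{i=1}^k (2A_i − 3)!! ≤ 15 · (2N − 4k − 3)!!. -/
open Nat Finset
open scoped Nat

private lemma df_merge (a b : ℕ) : (2*a+1)‼ * (2*b+1)‼ ≤ (2*(a+b)+1)‼ := by
  induction a with
  | zero => simp
  | succ n ih =>
    have e1 : 2*(n+1)+1 = 2*n+1+2 := by ring
    have e2 : 2*(n+1+b)+1 = 2*(n+b)+1+2 := by ring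
    rw [e1, e2, Nat.doubleFactorial_add_two, Nat.doubleFactorial_add_two]
    calc (2*n+1+2) * (2*n+1)‼ * (2*b+1)‼
        = (2*n+3) * ((2*n+1)‼ * (2*b+1)‼) := by ring
      _ ≤ (2*n+3) * (2*(n+b)+1)‼ := Nat.mul_le_mul_left _ ih
      _ ≤ (2*(n+b)+1+2) * (2*(n+b)+1)‼ := Nat.mul_le_mul_right _ (by omega)

private lemma df_prod_merge {ι : Type*} (s : Finset ι) (b : ι → ℕ) :
    ∏ i ∈ s, (2*b i+1)‼ ≤ (2*(∑ i ∈ s, b i)+1)‼ := by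
  classical
  induction s using Finset.induction with
  | empty => simp
  | @insert a s ha ih =>
    rw [Finset.prod_insert ha, Finset.sum_insert ha]
    calc (2*b a+1)‼ * ∏ i ∈ s, (2*b i+1)‼
        ≤ (2*b a+1)‼ * (2*(∑ i ∈ s, b i)+1)‼ := Nat.mul_le_mul_left _ ih
      _ ≤ (2*(b a + ∑ i ∈ s, b i)+1)‼ := df_merge _ _

private lemma df_final (a b : ℕ) : (2*a+5)‼ * (2*b+5)‼ ≤ 15 * (2*(a+b)+5)‼ := by
  induction a with
  | zero =>
    have : (2*0+5)‼ = 15 := by decide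
    simp [this]
  | succ n ih =>
    have e1 : 2*(n+1)+5 = 2*n+5+2 := by ring
    have e2 : 2*(n+1+b)+5 = 2*(n+b)+5+2 := by ring
    rw [e1, e2, Nat.doubleFactorial_add_two, Nat.doubleFactorial_add_two]
    calc (2*n+5+2) * (2*n+5)‼ * (2*b+5)‼
        = (2*n+7) * ((2*n+5)‼ * (2*b+5)‼) := by ring
      _ ≤ (2*n+7) * (15 * (2*(n+b)+5)‼) := Nat.mul_le_mul_left _ ih
      _ ≤ (2*(n+b)+7) * (15 * (2*(n+b)+5)‼) := Nat.mul_le_mul_right _ (by omega)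
      _ = 15 * ((2*(n+b)+5+2) * (2*(n+b)+5)‼) := by ring

/-- Let `k ≥ 2` and let `A₁, …, A_k` be positive even integers with
`Σ A_i = N`, at least two of which are `≥ 4`. Then
`∏_{i=1}^k (2A_i − 3)!! ≤ 15 · (2N − 4k − 3)!!`. -/
theorem prod_doubleFactorial_le (k N : ℕ) (hk : 2 ≤ k) (A : Fin k → ℕ)
    (hpos : ∀ i, 0 < A i) (heven : ∀ i, Even (A i)) (hA : ∑ i, A i = N)
    (htwo : ∃ i j : Fin k, i ≠ j ∧ 4 ≤ A i ∧ 4 ≤ A j) :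
    ∏ i, (2 * A i - 3)‼ ≤ 15 * (2 * N - 4 * k - 3)‼ := by
  classical
  obtain ⟨i, j, hij, hi4, hj4⟩ := htwo
  have h2 : ∀ l, 2 ≤ A l := by
    intro l
    obtain ⟨r, hr⟩ := heven l
    have := hpos l
    omega
  set f : Fin k → ℕ := fun l => (2 * A l - 3)‼ with hf
  have hji : j ∈ Finset.univ.erase i := Finset.mem_erase.mpr ⟨hij.symm, Finset.mem_univ j⟩
  set s : Finset (Fin k) := (Finset.univ.erase i).erase j with hs
  -- split product
  have hprod : ∏ l, f l = f i * (f j * ∏ l ∈ s, f l) := by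
    rw [Finset.mul_prod_erase _ _ hji, Finset.mul_prod_erase _ _ (Finset.mem_univ i)]
  have hsum : A i + (A j + ∑ l ∈ s, A l) = N := by
    rw [Finset.add_sum_erase _ _ hji, Finset.add_sum_erase _ _ (Finset.mem_univ i)]
    exact hA
  set T := ∑ l ∈ s, A l with hT
  set B := ∑ l ∈ s, (A l - 2) with hB
  have hcard : s.card = k - 2 := by
    rw [hs, Finset.card_erase_of_mem hji, Finset.card_erase_of_mem (Finset.mem_univ i)]
    simp
    omega
  have hBT : B + 2 * (k - 2) = T := by
    have : ∑ l ∈ s, (A l - 2 + 2) = T := by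
      apply Finset.sum_congr rfl
      intro l _
      have := h2 l
      omega
    rw [Finset.sum_add_distrib] at this
    simp [hcard] at this
    omega
  -- bound the product over s
  have hP : ∏ l ∈ s, f l ≤ (2 * B + 1)‼ := by
    have : ∏ l ∈ s, f l = ∏ l ∈ s, (2 * (A l - 2) + 1)‼ := by
      apply Finset.prod_congr rfl
      intro l _
      have h3 := h2 l
      simp only [hf]
      congr 1
      omega
    rw [this, hB]
    exact df_prod_merge s _
  have hfi : f i = (2 * (A i - 4) + 5)‼ := by
    have : 2 * A i - 3 = 2 * (A i - 4) + 5 := by omega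
    rw [hf]; simp only; rw [this]
  have hfj : f j = (2 * (A j - 2) + 1)‼ := by
    have : 2 * A j - 3 = 2 * (A j - 2) + 1 := by omega
    rw [hf]; simp only; rw [this]
  calc ∏ l, f l = f i * (f j * ∏ l ∈ s, f l) := hprod
    _ ≤ f i * (f j * (2 * B + 1)‼) :=
        Nat.mul_le_mul_left _ (Nat.mul_le_mul_left _ hP)
    _ = (2 * (A i - 4) + 5)‼ * ((2 * (A j - 2) + 1)‼ * (2 * B + 1)‼) := by
        rw [hfi, hfj]
    _ ≤ (2 * (A i - 4) + 5)‼ * (2 * ((A j - 2) + B) + 1)‼ :=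
        Nat.mul_le_mul_left _ (df_merge _ _)
    _ = (2 * (A i - 4) + 5)‼ * (2 * ((A j - 4) + B) + 5)‼ := by
        congr 2
        omega
    _ ≤ 15 * (2 * ((A i - 4) + ((A j - 4) + B)) + 5)‼ := df_final _ _
    _ = 15 * (2 * N - 4 * k - 3)‼ := by
        congr 2
        omega
end

section
/- Let L ≥ a ≥ 0 and b ≥ 0 be integers with L positive. Then Σ_{A ∈ C_L(L−a+1)} Σ_{B ∈ G_b(L−a+1)} ∏_{i=1}^{L−a+1} (A_i + 2B_i)! / (A_i! · B_i!) ≤ 2^{9L+5} · (a + 2b)! / (a! · b!). -/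
open Nat Finset

/-- `compositions n k` is the set `C_n(k)` of compositions of `n` of length `k`:
ordered `k`-tuples of positive integers summing to `n`. -/
def compositions (n k : ℕ) : Finset (Fin k → ℕ) :=
  (Finset.Nat.antidiagonalTuple k n).filter fun f => ∀ i, 0 < f i

/-- `weakCompositions n k` is the set `G_n(k)` of ordered `k`-tuples of nonnegative
integers summing to `n`. -/
def weakCompositions (n k : ℕ) : Finset (Fin k → ℕ) :=
  Finset.Nat.antidiagonalTuple k n

theorem stmt4_two_pow_le_central (m : ℕ) : 2^m ≤ (2*m).choose m := by
  induction m with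
  | zero => simp
  | succ n ih =>
    have h1 : (2*(n+1)).choose (n+1) = (2*n+1).choose n + (2*n+1).choose (n+1) := by
      rw [show 2*(n+1) = (2*n+1)+1 by ring, Nat.choose_succ_succ]
    have h2 : (2*n+1).choose (n+1) = (2*n+1).choose n := Nat.choose_symm_half n
    have h3 : (2*n).choose n ≤ (2*n+1).choose n := Nat.choose_le_choose n (by omega)
    calc 2^(n+1) = 2^n + 2^n := by ring
    _ ≤ (2*n+1).choose n + (2*n+1).choose (n+1) := by
        rw [h2]; exact Nat.add_le_add (le_trans ih h3) (le_trans ih h3)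
    _ = _ := h1.symm

theorem stmt4_two_pow_le_choose' {m b : ℕ} (h : 2*m ≤ b) : 2^m ≤ b.choose m :=
  le_trans (stmt4_two_pow_le_central m) (Nat.choose_le_choose m h)


theorem stmt4_two_term_vandermonde (m n i j : ℕ) (hi : 1 ≤ i) :
    m.choose i * n.choose j + m.choose (i-1) * n.choose (j+1) ≤ (m+n).choose (i+j) := by
  rw [Nat.add_choose_eq]
  have hmem1 : ((i, j) : ℕ × ℕ) ∈ Finset.HasAntidiagonal.antidiagonal (i+j) := Finset.HasAntidiagonal.mem_antidiagonal.mpr rfl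
  have hmem2 : ((i-1, j+1) : ℕ × ℕ) ∈ Finset.HasAntidiagonal.antidiagonal (i+j) :=
    Finset.HasAntidiagonal.mem_antidiagonal.mpr (by omega)
  have hne : ((i, j) : ℕ × ℕ) ≠ (i-1, j+1) := by
    intro h; have := congrArg Prod.snd h; simp at this
  have hsub : ({(i,j), (i-1,j+1)} : Finset (ℕ × ℕ)) ⊆ Finset.HasAntidiagonal.antidiagonal (i+j) := by
    intro p hp
    simp only [Finset.mem_insert, Finset.mem_singleton] at hp
    rcases hp with h | h <;> subst h <;> assumption
  calc m.choose i * n.choose j + m.choose (i-1) * n.choose (j+1)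
      = ∑ p ∈ ({(i,j), (i-1,j+1)} : Finset (ℕ × ℕ)), m.choose p.1 * n.choose p.2 := by
        rw [Finset.sum_pair hne]
    _ ≤ ∑ p ∈ Finset.HasAntidiagonal.antidiagonal (i+j), m.choose p.1 * n.choose p.2 :=
        Finset.sum_le_sum_of_subset_of_nonneg hsub (fun _ _ _ => Nat.zero_le _)

theorem stmt4_choose_mul_choose_le (m n i j : ℕ) : m.choose i * n.choose j ≤ (m+n).choose (i+j) := by
  rw [Nat.add_choose_eq]
  exact Finset.single_le_sum (f := fun p : ℕ × ℕ => m.choose p.1 * n.choose p.2)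
    (fun p _ => Nat.zero_le _) (Finset.HasAntidiagonal.mem_antidiagonal.mpr (rfl : (i, j).1 + (i, j).2 = i + j))

theorem stmt4_sq_choose_le (b m : ℕ) : b.choose m * b.choose m ≤ (2*b).choose (2*m) := by
  have := stmt4_choose_mul_choose_le b b m m
  have h2 : b + b = 2*b := by ring
  have h3 : m + m = 2*m := by ring
  rwa [h2, h3] at this

theorem stmt4_lemmaA (s A1 B1 b : ℕ) (h1 : 1 ≤ A1) (h2 : A1 ≤ s) (h3 : B1 < b) :
    (s+1).choose A1 * (b.choose B1 * b.choose B1) * (s+1+2*b) ≤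
      (s+1) * (2*B1+1) * ((s+1+2*b).choose (A1+2*B1)) := by
  set c1 := (s+1).choose A1 with hc1
  set c0 := (s+1).choose (A1-1) with hc0
  set d0 := (2*b).choose (2*B1) with hd0
  set d1 := (2*b).choose (2*B1+1) with hd1
  set e := b.choose B1 with he
  obtain ⟨t, ht⟩ : ∃ t, b = B1 + t ∧ 1 ≤ t := ⟨b - B1, by omega, by omega⟩
  have key1 : e * e ≤ d0 := stmt4_sq_choose_le b B1
  have key2 : d1 * (2*B1+1) = d0 * (2*t) := by
    have := Nat.choose_succ_right_eq (2*b) (2*B1)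
    rw [show 2*b - 2*B1 = 2*t by omega] at this
    exact this
  have key3 : c1 * A1 = c0 * (s+2-A1) := by
    have := Nat.choose_succ_right_eq (s+1) (A1-1)
    rw [show A1 - 1 + 1 = A1 by omega, show s+1-(A1-1) = s+2-A1 by omega] at this
    exact this
  have key4 : c1 ≤ (s+1) * c0 := by
    calc c1 ≤ c1 * A1 := Nat.le_mul_of_pos_right _ h1
    _ = c0 * (s+2-A1) := key3
    _ ≤ c0 * (s+1) := Nat.mul_le_mul_left _ (by omega)
    _ = (s+1) * c0 := Nat.mul_comm _ _
  have vander : c1 * d0 + c0 * d1 ≤ (s+1+2*b).choose (A1+2*B1) := by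
    have := stmt4_two_term_vandermonde (s+1) (2*b) A1 (2*B1) h1
    rwa [show (s+1)+2*b = s+1+2*b by ring] at this
  have part1 : c1 * (e*e) * (s+1+2*B1) ≤ (s+1) * (2*B1+1) * (c1 * d0) := by
    have hx : s+1+2*B1 ≤ (s+1)*(2*B1+1) := by nlinarith
    calc c1 * (e*e) * (s+1+2*B1) ≤ c1 * d0 * ((s+1)*(2*B1+1)) :=
      Nat.mul_le_mul (Nat.mul_le_mul_left _ key1) hx
    _ = (s+1) * (2*B1+1) * (c1 * d0) := by ring
  have part2 : c1 * (e*e) * (2*t) ≤ (s+1) * (2*B1+1) * (c0 * d1) := by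
    calc c1 * (e*e) * (2*t) ≤ ((s+1)*c0) * d0 * (2*t) :=
      Nat.mul_le_mul_right _ (Nat.mul_le_mul key4 key1)
    _ = (s+1) * c0 * (d0 * (2*t)) := by ring
    _ = (s+1) * c0 * (d1 * (2*B1+1)) := by rw [key2]
    _ = (s+1) * (2*B1+1) * (c0 * d1) := by ring
  calc c1 * (e*e) * (s+1+2*b)
      = c1 * (e*e) * (s+1+2*B1) + c1 * (e*e) * (2*t) := by
        rw [← Nat.mul_add]; congr 1; omega
    _ ≤ (s+1) * (2*B1+1) * (c1 * d0) + (s+1) * (2*B1+1) * (c0 * d1) :=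
        Nat.add_le_add part1 part2
    _ = (s+1) * (2*B1+1) * (c1 * d0 + c0 * d1) := by ring
    _ ≤ (s+1) * (2*B1+1) * ((s+1+2*b).choose (A1+2*B1)) :=
        Nat.mul_le_mul_left _ vander



theorem stmt4_cmf (i j : ℕ) : (i+j).choose i * i ! * j ! = (i+j)! := by
  have := Nat.choose_mul_factorial_mul_factorial (Nat.le_add_right i j)
  rwa [show i + j - i = j by omega] at this

theorem stmt4_mergeNat (A1 A2 B1 B2 b : ℕ) (hA1 : 1 ≤ A1) (hA2 : 1 ≤ A2)
    (hb : B1 + B2 = b) (hhalf : 2*B1 ≤ b) :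
    (A1+2*B1)! * (A2+2*B2)! * 2^B1 * (A1+A2-1)! * b ! ≤
      (2*B1+1) * ((A1+A2-1)+2*b)! * ((A1)! * (A2)! * ((B1)! * (B2)!)) := by
  set s := A1 + A2 - 1 with hs
  have hs1 : s + 1 = A1 + A2 := by omega
  by_cases hb0 : b = 0
  · have hB1 : B1 = 0 := by omega
    have hB2 : B2 = 0 := by omega
    subst hb0 hB1 hB2
    simp [Nat.factorial]
    exact Nat.le_of_eq (by ring)
  · have hblt : B1 < b := by omega
    set C := (s+1+2*b).choose (A1+2*B1) with hC
    have hCpos : 0 < C := Nat.choose_pos (by omega)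
    have hK : 0 < C * (s+1) := Nat.mul_pos hCpos (by omega)
    apply Nat.le_of_mul_le_mul_right _ hK
    have e1 : C * ((A1+2*B1)! * (A2+2*B2)!) = (s+1+2*b)! := by
      have := stmt4_cmf (A1+2*B1) (A2+2*B2)
      rw [show (A1+2*B1) + (A2+2*B2) = s+1+2*b by omega] at this
      rw [← this]; ring
    have e2 : (s+1).choose A1 * (A1)! * (A2)! = (s+1)! := by
      have := stmt4_cmf A1 A2
      rw [show A1 + A2 = s+1 from hs1.symm] at this
      exact this
    have e3 : b.choose B1 * (B1)! * (B2)! = b ! := by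
      have := stmt4_cmf B1 B2
      rw [hb] at this
      exact this
    have e4 : (s+1+2*b)! = (s+1+2*b) * (s+2*b)! := by
      rw [show s+1+2*b = (s+2*b)+1 by omega, Nat.factorial_succ]
    have e5 : (s+1)! = (s+1) * s ! := Nat.factorial_succ s
    have master : (A1+2*B1)! * (A2+2*B2)! * 2^B1 * s ! * b ! * (C * (s+1))
        = ((s+1).choose A1 * (b.choose B1 * 2^B1) * (s+1+2*b))
          * ((s+2*b)! * ((A1)! * (A2)! * ((B1)! * (B2)!))) := by
      calc (A1+2*B1)! * (A2+2*B2)! * 2^B1 * s ! * b ! * (C * (s+1))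
          = (C * ((A1+2*B1)! * (A2+2*B2)!)) * 2^B1 * ((s+1) * s !) * b ! := by ring
        _ = (s+1+2*b)! * 2^B1 * (s+1)! * b ! := by rw [e1, ← e5]
        _ = ((s+1+2*b) * (s+2*b)!) * 2^B1 * ((s+1).choose A1 * (A1)! * (A2)!)
              * (b.choose B1 * (B1)! * (B2)!) := by rw [← e4, e2, e3]
        _ = _ := by ring
    rw [master]
    have bound1 : (s+1).choose A1 * (b.choose B1 * 2^B1) * (s+1+2*b)
        ≤ (s+1) * (2*B1+1) * C := by
      calc (s+1).choose A1 * (b.choose B1 * 2^B1) * (s+1+2*b)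
          ≤ (s+1).choose A1 * (b.choose B1 * b.choose B1) * (s+1+2*b) := by
            apply Nat.mul_le_mul_right
            apply Nat.mul_le_mul_left
            exact Nat.mul_le_mul_left _ (stmt4_two_pow_le_choose' hhalf)
        _ ≤ (s+1) * (2*B1+1) * C := stmt4_lemmaA s A1 B1 b hA1 (by omega) hblt
    calc ((s+1).choose A1 * (b.choose B1 * 2^B1) * (s+1+2*b))
          * ((s+2*b)! * ((A1)! * (A2)! * ((B1)! * (B2)!)))
        ≤ ((s+1) * (2*B1+1) * C) * ((s+2*b)! * ((A1)! * (A2)! * ((B1)! * (B2)!))) :=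
          Nat.mul_le_mul_right _ bound1
      _ = (2*B1+1) * (s+2*b)! * ((A1)! * (A2)! * ((B1)! * (B2)!)) * (C * (s+1)) := by ring



noncomputable def stmt4_gg (A B : ℕ) : ℝ := ((A + 2*B)! : ℝ) / ((A)! * (B)!)

noncomputable def stmt4_ww (j : ℕ) : ℝ := (2*j+1)/2^j

lemma stmt4_gg_pos (A B : ℕ) : 0 < stmt4_gg A B := by
  have h1 : (0:ℝ) < ((A + 2*B)! : ℝ) := by exact_mod_cast Nat.factorial_pos _
  have h2 : (0:ℝ) < ((A)! : ℝ) * ((B)! : ℝ) := by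
    have := Nat.factorial_pos A
    have := Nat.factorial_pos B
    positivity
  exact div_pos h1 h2

lemma stmt4_gg_nonneg (A B : ℕ) : 0 ≤ stmt4_gg A B := (stmt4_gg_pos A B).le

lemma stmt4_ww_nonneg (j : ℕ) : 0 ≤ stmt4_ww j := by unfold stmt4_ww; positivity

lemma stmt4_cross (p q r s t u v w : ℝ) (hq : 0 < q) (hs : 0 < s) (hu : 0 < u) (hw : 0 < w)
    (h : p * r * (u * w) ≤ t * v * (q * s)) : p/q * (r/s) ≤ t/u * (v/w) := by
  rw [_root_.div_mul_div_comm, _root_.div_mul_div_comm, div_le_div_iff₀ (by positivity) (by positivity)]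
  linarith [h]

lemma stmt4_fact_cast_pos (n : ℕ) : (0:ℝ) < (n ! : ℝ) := by exact_mod_cast Nat.factorial_pos n

lemma stmt4_mergeR (A1 A2 B1 B2 b : ℕ) (hA1 : 1 ≤ A1) (hA2 : 1 ≤ A2)
    (hb : B1 + B2 = b) (hhalf : 2*B1 ≤ b) :
    stmt4_gg A1 B1 * stmt4_gg A2 B2 ≤ stmt4_ww B1 * stmt4_gg (A1+A2-1) b := by
  unfold stmt4_gg stmt4_ww
  apply stmt4_cross
  · exact mul_pos (stmt4_fact_cast_pos A1) (stmt4_fact_cast_pos B1)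
  · exact mul_pos (stmt4_fact_cast_pos A2) (stmt4_fact_cast_pos B2)
  · positivity
  · exact mul_pos (stmt4_fact_cast_pos _) (stmt4_fact_cast_pos b)
  · have H := stmt4_mergeNat A1 A2 B1 B2 b hA1 hA2 hb hhalf
    have H' : (((A1+2*B1)! * (A2+2*B2)! * 2^B1 * (A1+A2-1)! * b ! : ℕ) : ℝ) ≤
        (((2*B1+1) * ((A1+A2-1)+2*b)! * ((A1)! * (A2)! * ((B1)! * (B2)!)) : ℕ) : ℝ) :=
      Nat.cast_le.mpr H
    push_cast at H'
    calc ((A1+2*B1)! : ℝ) * ((A2+2*B2)! : ℝ) * ((2:ℝ)^B1 * (((A1+A2-1)! : ℝ) * (b ! : ℝ)))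
        = ((A1+2*B1)! : ℝ) * ((A2+2*B2)! : ℝ) * 2^B1 * ((A1+A2-1)! : ℝ) * (b ! : ℝ) := by ring
      _ ≤ (2*(B1:ℝ)+1) * (((A1+A2-1)+2*b)! : ℝ) * (((A1)! : ℝ) * ((A2)! : ℝ) * (((B1)! : ℝ) * ((B2)! : ℝ))) := H'
      _ = (2*(B1:ℝ)+1) * (((A1+A2-1)+2*b)! : ℝ) * (((A1)! : ℝ) * ((B1)! : ℝ) * (((A2)! : ℝ) * ((B2)! : ℝ))) := by ring

lemma stmt4_mergeR_sym (A1 A2 B1 B2 b : ℕ) (hA1 : 1 ≤ A1) (hA2 : 1 ≤ A2) (hb : B1 + B2 = b) :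
    stmt4_gg A1 B1 * stmt4_gg A2 B2 ≤ (stmt4_ww B1 + stmt4_ww B2) * stmt4_gg (A1+A2-1) b := by
  rcases le_or_gt (2*B1) b with h | h
  · have h1 := stmt4_mergeR A1 A2 B1 B2 b hA1 hA2 hb h
    have hpos : (0:ℝ) ≤ stmt4_ww B2 * stmt4_gg (A1+A2-1) b := mul_nonneg (stmt4_ww_nonneg _) (stmt4_gg_nonneg _ _)
    nlinarith [h1, hpos]
  · have h2 : 2*B2 ≤ b := by omega
    have h1 := stmt4_mergeR A2 A1 B2 B1 b hA2 hA1 (by omega) h2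
    have he : A2 + A1 - 1 = A1 + A2 - 1 := by omega
    rw [he] at h1
    have hpos : (0:ℝ) ≤ stmt4_ww B1 * stmt4_gg (A1+A2-1) b := mul_nonneg (stmt4_ww_nonneg _) (stmt4_gg_nonneg _ _)
    nlinarith [h1, hpos]

lemma stmt4_sum_w_le (n : ℕ) : ∑ j ∈ Finset.range n, stmt4_ww j ≤ 6 := by
  have key : ∀ n : ℕ, ∑ j ∈ Finset.range n, stmt4_ww j = 6 - (4*n+6)/2^n := by
    intro n
    induction n with
    | zero => norm_num [stmt4_ww]
    | succ m ih =>
      rw [Finset.sum_range_succ, ih]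
      unfold stmt4_ww
      have h2 : (2:ℝ)^(m+1) = 2 * 2^m := by ring
      have hp : (2:ℝ)^m ≠ 0 := by positivity
      field_simp
      push_cast; ring
  rw [key n]
  have : (0:ℝ) ≤ (4*n+6)/2^n := by positivity
  linarith

lemma stmt4_mergeSum (A1 A2 b : ℕ) (hA1 : 1 ≤ A1) (hA2 : 1 ≤ A2) :
    ∑ j ∈ Finset.range (b+1), stmt4_gg A1 j * stmt4_gg A2 (b-j) ≤ 12 * stmt4_gg (A1+A2-1) b := by
  have step : ∀ j ∈ Finset.range (b+1), stmt4_gg A1 j * stmt4_gg A2 (b-j) ≤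
      (stmt4_ww j + stmt4_ww (b-j)) * stmt4_gg (A1+A2-1) b := by
    intro j hj
    rw [Finset.mem_range] at hj
    exact stmt4_mergeR_sym A1 A2 j (b-j) b hA1 hA2 (by omega)
  calc ∑ j ∈ Finset.range (b+1), stmt4_gg A1 j * stmt4_gg A2 (b-j)
      ≤ ∑ j ∈ Finset.range (b+1), (stmt4_ww j + stmt4_ww (b-j)) * stmt4_gg (A1+A2-1) b :=
        Finset.sum_le_sum step
    _ = (∑ j ∈ Finset.range (b+1), (stmt4_ww j + stmt4_ww (b-j))) * stmt4_gg (A1+A2-1) b := by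
        rw [Finset.sum_mul]
    _ ≤ 12 * stmt4_gg (A1+A2-1) b := by
        apply mul_le_mul_of_nonneg_right _ (stmt4_gg_nonneg _ _)
        rw [Finset.sum_add_distrib]
        have h1 : ∑ j ∈ Finset.range (b+1), stmt4_ww (b-j) = ∑ j ∈ Finset.range (b+1), stmt4_ww j := by
          rw [← Finset.sum_range_reflect]
          apply Finset.sum_congr rfl
          intro j hj
          rw [Finset.mem_range] at hj
          congr 1
          omega
        rw [h1]
        have := stmt4_sum_w_le (b+1)
        linarith


theorem stmt4_sum_adt_succ {M : Type*} [AddCommMonoid M] (k n : ℕ) (f : (Fin (k+1) → ℕ) → M) :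
    ∑ x ∈ Finset.Nat.antidiagonalTuple (k+1) n, f x =
      ∑ j ∈ Finset.range (n+1), ∑ x ∈ Finset.Nat.antidiagonalTuple k (n-j), f (Fin.cons j x) := by
  rw [Finset.sum_sigma' (Finset.range (n+1)) (fun j => Finset.Nat.antidiagonalTuple k (n-j))
    (fun j x => f (Fin.cons j x))]
  apply Finset.sum_nbij' (i := fun (x : Fin (k+1) → ℕ) => (⟨x 0, Fin.tail x⟩ :
      Σ j : ℕ, Fin k → ℕ)) (j := fun p => Fin.cons p.1 p.2)
  · intro x hx
    rw [Finset.Nat.mem_antidiagonalTuple, Fin.sum_univ_succ] at hx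
    simp only [Finset.mem_sigma, Finset.mem_range, Finset.Nat.mem_antidiagonalTuple]
    constructor
    · omega
    · show ∑ i, Fin.tail x i = n - x 0
      unfold Fin.tail
      omega
  · intro p hp
    simp only [Finset.mem_sigma, Finset.mem_range, Finset.Nat.mem_antidiagonalTuple] at hp
    rw [Finset.Nat.mem_antidiagonalTuple, Fin.sum_univ_succ]
    simp only [Fin.cons_zero, Fin.cons_succ]
    omega
  · intro x hx
    exact Fin.cons_self_tail x
  · intro p hp
    ext
    · simp
    · simp [Fin.tail_cons]
  · intro x hx
    rw [Fin.cons_self_tail]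

theorem stmt4_sum_pow_two_lt (m : ℕ) : ∑ j ∈ Finset.range m, 2^j < 2^m := by
  induction m with
  | zero => simp
  | succ n ih =>
    rw [Finset.sum_range_succ]
    have : 2^(n+1) = 2^n + 2^n := by ring
    omega

theorem stmt4_card_adt_le (k : ℕ) : ∀ n, (Finset.Nat.antidiagonalTuple k n).card ≤ 2^(n+k) := by
  induction k with
  | zero =>
    intro n
    cases n with
    | zero => simp
    | succ m => simp
  | succ k ih =>
    intro n
    have : (Finset.Nat.antidiagonalTuple (k+1) n).card
        = ∑ j ∈ Finset.range (n+1), (Finset.Nat.antidiagonalTuple k (n-j)).card := by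
      rw [Finset.card_eq_sum_ones, stmt4_sum_adt_succ k n (fun _ => 1)]
      exact Finset.sum_congr rfl fun j _ => (Finset.card_eq_sum_ones _).symm
    rw [this]
    calc ∑ j ∈ Finset.range (n+1), (Finset.Nat.antidiagonalTuple k (n-j)).card
        ≤ ∑ j ∈ Finset.range (n+1), 2^((n-j)+k) := Finset.sum_le_sum (fun j _ => ih (n-j))
      _ = ∑ j ∈ Finset.range (n+1), 2^k * 2^(n-j) := by
          apply Finset.sum_congr rfl; intro j _; rw [← pow_add]; ring_nf
      _ = 2^k * ∑ j ∈ Finset.range (n+1), 2^(n-j) := by rw [Finset.mul_sum]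
      _ = 2^k * ∑ j ∈ Finset.range (n+1), 2^j := by
          congr 1
          rw [← Finset.sum_range_reflect]
          apply Finset.sum_congr rfl
          intro j hj
          rw [Finset.mem_range] at hj
          congr 1
          omega
      _ ≤ 2^k * 2^(n+1) := Nat.mul_le_mul_left _ (le_of_lt (stmt4_sum_pow_two_lt (n+1)))
      _ = 2^(n+(k+1)) := by rw [← pow_add]; ring_nf


theorem stmt4_L5 (k : ℕ) : ∀ (A : Fin (k+1) → ℕ), (∀ i, 1 ≤ A i) → ∀ b : ℕ,
    ∑ B ∈ Finset.Nat.antidiagonalTuple (k+1) b, ∏ i, stmt4_gg (A i) (B i)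
      ≤ 12^k * stmt4_gg ((∑ i, A i) - k) b := by
  induction k with
  | zero =>
    intro A hA b
    rw [Finset.Nat.antidiagonalTuple_one, Finset.sum_singleton]
    simp [Fin.prod_univ_one, Fin.sum_univ_one]
  | succ k ih =>
    intro A hA b
    rw [stmt4_sum_adt_succ]
    have hT : (k+1) ≤ ∑ i : Fin (k+1), A i.succ := by
      calc (k+1) = ∑ _i : Fin (k+1), 1 := by simp
        _ ≤ ∑ i : Fin (k+1), A i.succ := Finset.sum_le_sum (fun i _ => hA i.succ)
    set T := ∑ i : Fin (k+1), A i.succ with hTdef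
    have hsum : ∑ i, A i = A 0 + T := Fin.sum_univ_succ A
    have step1 : ∀ j ∈ Finset.range (b+1),
        ∑ x ∈ Finset.Nat.antidiagonalTuple (k+1) (b-j),
          ∏ i, stmt4_gg (A i) ((Fin.cons j x : Fin _ → ℕ) i)
        ≤ stmt4_gg (A 0) j * (12^k * stmt4_gg (T - k) (b-j)) := by
      intro j hj
      have hprod : ∀ x : Fin (k+1) → ℕ,
          ∏ i, stmt4_gg (A i) ((Fin.cons j x : Fin _ → ℕ) i) = stmt4_gg (A 0) j * ∏ i : Fin (k+1), stmt4_gg (A i.succ) (x i) := by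
        intro x
        rw [Fin.prod_univ_succ]
        simp [Fin.cons_zero, Fin.cons_succ]
      calc ∑ x ∈ Finset.Nat.antidiagonalTuple (k+1) (b-j), ∏ i, stmt4_gg (A i) ((Fin.cons j x : Fin _ → ℕ) i)
          = stmt4_gg (A 0) j * ∑ x ∈ Finset.Nat.antidiagonalTuple (k+1) (b-j),
              ∏ i : Fin (k+1), stmt4_gg (A i.succ) (x i) := by
            rw [Finset.mul_sum]
            exact Finset.sum_congr rfl fun x _ => hprod x
        _ ≤ stmt4_gg (A 0) j * (12^k * stmt4_gg (T - k) (b-j)) := by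
            apply mul_le_mul_of_nonneg_left _ (stmt4_gg_nonneg _ _)
            exact ih (fun i => A i.succ) (fun i => hA i.succ) (b-j)
    calc ∑ j ∈ Finset.range (b+1), ∑ x ∈ Finset.Nat.antidiagonalTuple (k+1) (b-j),
            ∏ i, stmt4_gg (A i) ((Fin.cons j x : Fin _ → ℕ) i)
        ≤ ∑ j ∈ Finset.range (b+1), stmt4_gg (A 0) j * (12^k * stmt4_gg (T - k) (b-j)) :=
          Finset.sum_le_sum step1
      _ = 12^k * ∑ j ∈ Finset.range (b+1), stmt4_gg (A 0) j * stmt4_gg (T - k) (b-j) := by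
          rw [Finset.mul_sum]; apply Finset.sum_congr rfl; intro j _; ring
      _ ≤ 12^k * (12 * stmt4_gg (A 0 + (T - k) - 1) b) := by
          apply mul_le_mul_of_nonneg_left _ (by positivity)
          exact stmt4_mergeSum (A 0) (T - k) b (hA 0) (by omega)
      _ = 12^(k+1) * stmt4_gg ((∑ i, A i) - (k+1)) b := by
          rw [show A 0 + (T - k) - 1 = (∑ i, A i) - (k+1) by omega]
          ring



/-- Let `L ≥ a ≥ 0` and `b ≥ 0` be integers with `L` positive. Then
`Σ_{A ∈ C_L(L−a+1)} Σ_{B ∈ G_b(L−a+1)} ∏_i (A_i + 2B_i)!/(A_i!·B_i!)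
  ≤ 2^{9L+5}·(a+2b)!/(a!·b!)`. -/
theorem sum_compositions_prod_le (L a b : ℕ) (hL : 0 < L) (haL : a ≤ L) :
    ∑ A ∈ compositions L (L - a + 1), ∑ B ∈ weakCompositions b (L - a + 1),
      ∏ i, ((A i + 2 * B i)! : ℝ) / ((A i)! * (B i)!) ≤
    2 ^ (9 * L + 5) * (a + 2 * b)! / ((a)! * (b)!) := by
  set m := L - a with hm
  have key : ∀ A ∈ compositions L (m + 1),
      ∑ B ∈ weakCompositions b (m+1), ∏ i, ((A i + 2 * B i)! : ℝ) / ((A i)! * (B i)!)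
        ≤ 12^m * stmt4_gg a b := by
    intro A hA
    rw [compositions, Finset.mem_filter, Finset.Nat.mem_antidiagonalTuple] at hA
    obtain ⟨hsum, hpos⟩ := hA
    have h1 : ∑ B ∈ weakCompositions b (m+1), ∏ i, ((A i + 2 * B i)! : ℝ) / ((A i)! * (B i)!)
        = ∑ B ∈ Finset.Nat.antidiagonalTuple (m+1) b, ∏ i, stmt4_gg (A i) (B i) := rfl
    rw [h1]
    have h2 := stmt4_L5 m A (fun i => hpos i) b
    rwa [hsum, show L - m = a by omega] at h2
  have hcard : (compositions L (m+1)).card ≤ 2^(L + (m+1)) := by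
    calc (compositions L (m+1)).card ≤ (Finset.Nat.antidiagonalTuple (m+1) L).card :=
        Finset.card_le_card (Finset.filter_subset _ _)
      _ ≤ 2^(L + (m+1)) := stmt4_card_adt_le (m+1) L
  have step : ∑ A ∈ compositions L (m + 1), ∑ B ∈ weakCompositions b (m+1),
      ∏ i, ((A i + 2 * B i)! : ℝ) / ((A i)! * (B i)!)
      ≤ (compositions L (m+1)).card * (12^m * stmt4_gg a b) := by
    calc ∑ A ∈ compositions L (m + 1), ∑ B ∈ weakCompositions b (m+1),
        ∏ i, ((A i + 2 * B i)! : ℝ) / ((A i)! * (B i)!)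
        ≤ ∑ _A ∈ compositions L (m + 1), 12^m * stmt4_gg a b := Finset.sum_le_sum key
      _ = (compositions L (m+1)).card * (12^m * stmt4_gg a b) := by
          rw [Finset.sum_const, nsmul_eq_mul]
  have hrhs : (2 : ℝ) ^ (9 * L + 5) * (a + 2 * b)! / ((a)! * (b)!)
      = 2 ^ (9*L+5) * stmt4_gg a b := by
    rw [stmt4_gg, mul_div_assoc]
  rw [hrhs]
  have hscal : ((compositions L (m+1)).card : ℝ) * 12^m ≤ 2^(9*L+5) := by
    have hmL : m ≤ L := by omega
    calc ((compositions L (m+1)).card : ℝ) * 12^m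
        ≤ (2:ℝ)^(L+(m+1)) * 12^m := by
          apply mul_le_mul_of_nonneg_right _ (by positivity)
          exact_mod_cast Nat.cast_le.mpr hcard
      _ ≤ (2:ℝ)^(L+(m+1)) * 16^m := by
          apply mul_le_mul_of_nonneg_left _ (by positivity)
          exact pow_le_pow_left₀ (by norm_num) (by norm_num) m
      _ = (2:ℝ)^(L+(m+1)+4*m) := by
          rw [show (16:ℝ) = 2^4 by norm_num, ← pow_mul, ← pow_add]
      _ ≤ (2:ℝ)^(9*L+5) := by
          apply pow_le_pow_right₀ (by norm_num)
          omega
  calc ∑ A ∈ compositions L (m + 1), ∑ B ∈ weakCompositions b (m+1),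
      ∏ i, ((A i + 2 * B i)! : ℝ) / ((A i)! * (B i)!)
      ≤ (compositions L (m+1)).card * (12^m * stmt4_gg a b) := step
    _ = ((compositions L (m+1)).card * 12^m) * stmt4_gg a b := by ring
    _ ≤ 2^(9*L+5) * stmt4_gg a b := mul_le_mul_of_nonneg_right hscal (stmt4_gg_nonneg a b)
end

section
/- Let n ≤ r be positive integers and let k₁, k₂, …, k_n be positive integers with k = k₁ + k₂ + … + k_n. Then Σ_{ℓ ∈ C_r(n)} ∏_{i=1}^n k_i^{2ℓ_i − 2} / (2ℓ_i − 2)! ≤ k^{2(r−n)} / (2r − 2n)!. -/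
open Nat Finset

lemma exp_multinomial (n N : ℕ) (k : Fin n → ℕ) :
    ∑ a ∈ Finset.piAntidiag (Finset.univ : Finset (Fin n)) N,
      ∏ i, (k i : ℝ) ^ (a i) / (a i)! = ((∑ i, k i : ℕ) : ℝ) ^ N / N ! := by
  rw [eq_div_iff (by positivity : ((N ! : ℕ) : ℝ) ≠ 0), Nat.cast_sum,
    Finset.sum_pow_eq_sum_piAntidiag, Finset.sum_mul]
  refine Finset.sum_congr rfl fun a ha => ?_
  rw [Finset.mem_piAntidiag] at ha
  have hspec := Nat.multinomial_spec (Finset.univ : Finset (Fin n)) a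
  rw [ha.1] at hspec
  have : ((N ! : ℕ) : ℝ) = (∏ i, ((a i)! : ℕ) : ℕ) * (Nat.multinomial Finset.univ a : ℝ) := by
    rw [← hspec]; push_cast; ring
  rw [Finset.prod_div_distrib, this]
  have hne : ((∏ i, ((a i)! : ℕ) : ℕ) : ℝ) ≠ 0 := by positivity
  push_cast at hne ⊢
  field_simp

/-- Let `n ≤ r` be positive integers and `k₁, …, k_n` positive integers
with `k = Σ k_i`.  Then `Σ_{ℓ ∈ C_r(n)} ∏_i k_i^{2ℓ_i−2}/(2ℓ_i−2)! ≤ k^{2(r−n)}/(2r−2n)!`. -/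
theorem sum_compositions_pow_div_factorial_le (n r : ℕ) (hn : 0 < n) (hnr : n ≤ r)
    (k : Fin n → ℕ) (hk : ∀ i, 0 < k i) :
    ∑ l ∈ compositions r n, ∏ i, (k i : ℝ) ^ (2 * l i - 2) / (2 * l i - 2)! ≤
      ((∑ i, k i : ℕ) : ℝ) ^ (2 * (r - n)) / (2 * r - 2 * n)! := by
  have hNN : 2 * r - 2 * n = 2 * (r - n) := by omega
  rw [hNN, ← exp_multinomial n (2 * (r - n)) k]
  set N := 2 * (r - n) with hN
  set phi : (Fin n → ℕ) → (Fin n → ℕ) := fun l i => 2 * l i - 2 with hphi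
  have hmem : ∀ l ∈ compositions r n, (∑ i, l i = r) ∧ ∀ i, 0 < l i := by
    intro l hl
    rw [compositions, Finset.mem_filter, Finset.Nat.mem_antidiagonalTuple] at hl
    exact hl
  have hinj : ∀ x ∈ compositions r n, ∀ y ∈ compositions r n, phi x = phi y → x = y := by
    intro x hx y hy h
    funext i
    have h1 := (hmem x hx).2 i
    have h2 := (hmem y hy).2 i
    have := congrFun h i
    simp only [hphi] at this
    omega
  have himg : (compositions r n).image phi ⊆
      Finset.piAntidiag (Finset.univ : Finset (Fin n)) N := by
    intro a ha
    rw [Finset.mem_image] at ha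
    obtain ⟨l, hl, rfl⟩ := ha
    rw [Finset.mem_piAntidiag]
    refine ⟨?_, fun i _ => Finset.mem_univ i⟩
    obtain ⟨hsum, hpos⟩ := hmem l hl
    have h1 : ∑ i, (phi l i) = 2 * (∑ i, (l i - 1)) := by
      rw [Finset.mul_sum]
      refine Finset.sum_congr rfl fun i _ => ?_
      have := hpos i; simp only [hphi]; omega
    have h2 : ∑ i, ((l i - 1) + 1) = ∑ i, l i :=
      Finset.sum_congr rfl fun i _ => by have := hpos i; omega
    have h3 : ∑ i, ((l i - 1) + 1) = (∑ i, (l i - 1)) + n := by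
      rw [Finset.sum_add_distrib]; simp
    show ∑ i, phi l i = N
    omega
  calc ∑ l ∈ compositions r n, ∏ i, (k i : ℝ) ^ (2 * l i - 2) / (2 * l i - 2)!
      = ∑ a ∈ (compositions r n).image phi, ∏ i, (k i : ℝ) ^ (a i) / (a i)! := by
        rw [Finset.sum_image hinj]
    _ ≤ ∑ a ∈ Finset.piAntidiag (Finset.univ : Finset (Fin n)) N,
          ∏ i, (k i : ℝ) ^ (a i) / (a i)! := by
        refine Finset.sum_le_sum_of_subset_of_nonneg himg fun a _ _ => ?_
        positivity
end

section
/- For every integer k ≥ 1, Σ_{i=1}^{k−1} i! · (k − i)! ≤ 4 · (k − 1)!. -/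
open Nat Finset

lemma choose_two_le_aux (n : ℕ) : ∀ i, 2 ≤ i → i ≤ n / 2 → n.choose 2 ≤ n.choose i := by
  intro i h2 hle
  induction i, h2 using Nat.le_induction with
  | base => exact le_rfl
  | succ i hi ih =>
    exact (ih (by omega)).trans (Nat.choose_le_succ_of_lt_half_left (by omega))

lemma choose_two_le (n i : ℕ) (h2 : 2 ≤ i) (h : i + 2 ≤ n) : n.choose 2 ≤ n.choose i := by
  rcases le_or_gt i (n / 2) with hle | hgt
  · exact choose_two_le_aux n i h2 hle
  · have hin : i ≤ n := by omega
    rw [← Nat.choose_symm hin]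
    exact choose_two_le_aux n (n - i) (by omega) (by omega)

lemma term_le (k i : ℕ) (h2 : 2 ≤ i) (hik : i + 2 ≤ k) :
    i ! * (k - i)! ≤ 2 * (k - 2)! := by
  have hik' : i ≤ k := by omega
  have h2k : 2 ≤ k := by omega
  have e1 : k.choose i * i ! * (k - i)! = k ! := Nat.choose_mul_factorial_mul_factorial hik'
  have e2 : k.choose 2 * 2 ! * (k - 2)! = k ! := Nat.choose_mul_factorial_mul_factorial h2k
  have hc : k.choose 2 ≤ k.choose i := choose_two_le k i h2 hik
  have hpos : 0 < k.choose 2 := Nat.choose_pos h2k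
  have key : k.choose 2 * (i ! * (k - i)!) ≤ k.choose 2 * (2 * (k - 2)!) := by
    calc k.choose 2 * (i ! * (k - i)!) ≤ k.choose i * (i ! * (k - i)!) :=
          Nat.mul_le_mul_right _ hc
      _ = k ! := by rw [← e1]; ring
      _ = k.choose 2 * (2 * (k - 2)!) := by rw [← e2]; simp [Nat.factorial]; ring
  exact Nat.le_of_mul_le_mul_left key hpos

/-- For every integer `k ≥ 1`,
`Σ_{i=1}^{k−1} i! · (k − i)! ≤ 4 · (k − 1)!`. -/
theorem sum_factorial_mul_factorial_le (k : ℕ) (hk : 1 ≤ k) :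
    ∑ i ∈ Finset.Ico 1 k, i ! * (k - i)! ≤ 4 * (k - 1)! := by
  rcases le_or_gt k 2 with hk2 | hk3
  · interval_cases k <;> simp [Nat.factorial]
  -- now k ≥ 3
  have h1 : (1:ℕ) < k - 1 := by omega
  have hsplit : ∑ i ∈ Finset.Ico 1 k, i ! * (k - i)! =
      1 ! * (k - 1)! + (∑ i ∈ Finset.Ico 2 (k - 1), i ! * (k - i)!)
        + (k - 1)! * (k - (k - 1))! := by
    rw [show k = (k - 1) + 1 by omega]
    rw [Finset.sum_Ico_succ_top (by omega)]
    congr 1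
    rw [Finset.sum_eq_sum_Ico_succ_bot (by omega)]
    simp only [show (k - 1) + 1 - 1 = k - 1 by omega]
  have hmid : ∑ i ∈ Finset.Ico 2 (k - 1), i ! * (k - i)! ≤ (k - 3) * (2 * (k - 2)!) := by
    have := Finset.sum_le_card_nsmul (Finset.Ico 2 (k - 1)) (fun i => i ! * (k - i)!)
      (2 * (k - 2)!) (by
        intro i hi
        simp only [Finset.mem_Ico] at hi
        exact term_le k i hi.1 (by omega))
    simpa [Nat.card_Ico, smul_eq_mul, show k - 1 - 2 = k - 3 by omega] using this
  rw [hsplit]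
  have hfac : (k - 1)! = (k - 1) * (k - 2)! := by
    rw [show k - 1 = (k - 2) + 1 by omega, Nat.factorial_succ]
  have hend : k - (k - 1) = 1 := by omega
  rw [hend]
  simp only [Nat.factorial_one, one_mul, mul_one]
  have hmid' : (k - 3) * (2 * (k - 2)!) ≤ 2 * (k - 1)! := by
    rw [hfac]
    calc (k - 3) * (2 * (k - 2)!) = 2 * ((k - 3) * (k - 2)!) := by ring
      _ ≤ 2 * ((k - 1) * (k - 2)!) :=
        Nat.mul_le_mul_left _ (Nat.mul_le_mul_right _ (by omega))
  omega
end
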